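/- Suppose that for every m-multisample the feasibility region 𝒳_m of P_2[{δ_i}_{i=1}^m] has nonempty interior. Fix d = 2n_δ and m ≥ d. Then for every ε ∈ (0,1): ℙ^m{(δ_1,…,δ_m) ∈ Δ^m : sup_{x∈𝒳_m} ℙ(δ ∈ Δ : g(x, δ) > 0) > ε} ≤ binom(m,d)·(1−ε)^{m−d}; that is, the probabilistic constraint-violation guarantee holds uniformly over the entire feasibility region of the robust problem P_2[{δ_i}_{i=1}^m]. -/

import Mathlib

open MeasureTheory

/-- `B(p_S)`: the smallest axis-aligned hyper-rectangle containing the samples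
`{δ_i}_{i∈S}`. -/
def sampleBox {nδ m : ℕ} (ω : Fin m → Fin nδ → ℝ) (S : Finset (Fin m)) :
    Set (Fin nδ → ℝ) :=
  {δ | ∀ ℓ : Fin nδ, sInf ((fun i => ω i ℓ) '' (S : Set (Fin m))) ≤ δ ℓ ∧
    δ ℓ ≤ sSup ((fun i => ω i ℓ) '' (S : Set (Fin m)))}


section aux
variable {nδ m : ℕ}

lemma mem_sampleBox_self {ω : Fin m → Fin nδ → ℝ} {J : Finset (Fin m)}
    {i : Fin m} (hi : i ∈ J) : ω i ∈ sampleBox ω J := by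
  intro ℓ
  constructor
  · exact csInf_le (J.finite_toSet.image _).bddBelow ⟨i, by simpa using hi, rfl⟩
  · exact le_csSup (J.finite_toSet.image _).bddAbove ⟨i, by simpa using hi, rfl⟩

lemma sampleBox_mono {ω : Fin m → Fin nδ → ℝ} {I J : Finset (Fin m)}
    (hIJ : I ⊆ J) (hI : I.Nonempty) : sampleBox ω I ⊆ sampleBox ω J := by
  intro δ hδ ℓ
  obtain ⟨h1, h2⟩ := hδ ℓ
  have himg : ((fun i => ω i ℓ) '' (I : Set (Fin m))).Nonempty :=
    (Finset.coe_nonempty.2 hI).image _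
  constructor
  · refine le_trans (csInf_le_csInf (J.finite_toSet.image _).bddBelow himg ?_) h1
    exact Set.image_mono (by exact_mod_cast hIJ)
  · refine le_trans h2 (csSup_le_csSup (J.finite_toSet.image _).bddAbove himg ?_)
    exact Set.image_mono (by exact_mod_cast hIJ)

lemma exists_core (hnδ : 0 < nδ) (hm : 2 * nδ ≤ m) (ω : Fin m → Fin nδ → ℝ) :
    ∃ I : Finset (Fin m), I.Nonempty ∧ I.card = 2 * nδ ∧
      sampleBox ω I = sampleBox ω Finset.univ := by
  have hm0 : 0 < m := lt_of_lt_of_le (by omega) hm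
  haveI : NeZero m := ⟨by omega⟩
  have h1 : ∀ ℓ : Fin nδ, ∃ i : Fin m, ∀ j : Fin m, ω i ℓ ≤ ω j ℓ := fun ℓ =>
    Finite.exists_min (fun i => ω i ℓ)
  have h2 : ∀ ℓ : Fin nδ, ∃ i : Fin m, ∀ j : Fin m, ω j ℓ ≤ ω i ℓ := fun ℓ =>
    Finite.exists_max (fun i => ω i ℓ)
  choose fmin hfmin using h1
  choose fmax hfmax using h2
  set I₀ : Finset (Fin m) := Finset.image fmin Finset.univ ∪ Finset.image fmax Finset.univ
    with hI₀def
  have hI₀card : I₀.card ≤ 2 * nδ := by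
    refine le_trans (Finset.card_union_le _ _) ?_
    have := Finset.card_image_le (s := (Finset.univ : Finset (Fin nδ))) (f := fmin)
    have := Finset.card_image_le (s := (Finset.univ : Finset (Fin nδ))) (f := fmax)
    simp only [Finset.card_univ, Fintype.card_fin] at *
    omega
  obtain ⟨I, hI₀I, hIuniv, hIcard⟩ :=
    Finset.exists_subsuperset_card_eq (Finset.subset_univ I₀) hI₀card
      (by simpa using hm)
  have hfmin0 : fmin ⟨0, hnδ⟩ ∈ I₀ := by
    apply Finset.mem_union_left
    exact Finset.mem_image_of_mem _ (Finset.mem_univ _)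
  have hIne : I.Nonempty := ⟨_, hI₀I hfmin0⟩
  refine ⟨I, hIne, hIcard, ?_⟩
  apply Set.Subset.antisymm (sampleBox_mono hIuniv hIne)
  intro δ hδ ℓ
  obtain ⟨hl, hr⟩ := hδ ℓ
  have hminI : fmin ℓ ∈ I := hI₀I (Finset.mem_union_left _
    (Finset.mem_image_of_mem _ (Finset.mem_univ _)))
  have hmaxI : fmax ℓ ∈ I := hI₀I (Finset.mem_union_right _
    (Finset.mem_image_of_mem _ (Finset.mem_univ _)))
  constructor
  · calc sInf ((fun i => ω i ℓ) '' (I : Set (Fin m)))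
        ≤ ω (fmin ℓ) ℓ := csInf_le (I.finite_toSet.image _).bddBelow
          ⟨fmin ℓ, by simpa using hminI, rfl⟩
      _ ≤ sInf ((fun i => ω i ℓ) '' ((Finset.univ : Finset (Fin m)) : Set (Fin m))) := by
          refine le_csInf ?_ ?_
          · exact ⟨ω (fmin ℓ) ℓ, ⟨fmin ℓ, by simp, rfl⟩⟩
          · rintro b ⟨j, -, rfl⟩; exact hfmin ℓ j
      _ ≤ δ ℓ := hl
  · calc δ ℓ ≤ sSup ((fun i => ω i ℓ) '' ((Finset.univ : Finset (Fin m)) : Set (Fin m))) := hr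
      _ ≤ ω (fmax ℓ) ℓ := by
          refine csSup_le ?_ ?_
          · exact ⟨ω (fmax ℓ) ℓ, ⟨fmax ℓ, by simp, rfl⟩⟩
          · rintro b ⟨j, -, rfl⟩; exact hfmax ℓ j
      _ ≤ sSup ((fun i => ω i ℓ) '' (I : Set (Fin m))) :=
          le_csSup (I.finite_toSet.image _).bddAbove ⟨fmax ℓ, by simpa using hmaxI, rfl⟩

end aux

section core
variable {nδ m : ℕ}

lemma key_bound (P : Measure (Fin nδ → ℝ)) [IsProbabilityMeasure P]
    (I : Finset (Fin m)) (hI : I.Nonempty) (ε : ℝ) (hε0 : 0 ≤ ε) :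
    (Measure.pi fun _ : Fin m => P)
      {ω : Fin m → Fin nδ → ℝ | (∀ j : Fin m, ω j ∈ sampleBox ω I) ∧
        ENNReal.ofReal ε < P (sampleBox ω I)ᶜ} ≤
      (ENNReal.ofReal (1 - ε)) ^ (m - I.card) := by
  classical
  haveI : Nonempty {i : Fin m // i ∈ I} := ⟨⟨hI.choose, hI.choose_spec⟩⟩
  set Y := ({i : Fin m // i ∈ I} → (Fin nδ → ℝ)) with hYdef
  set lo : Y → Fin nδ → ℝ := fun y ℓ => sInf (Set.range fun i => y i ℓ) with hlodef
  set hi : Y → Fin nδ → ℝ := fun y ℓ => sSup (Set.range fun i => y i ℓ) with hhidef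
  set Box : Y → Set (Fin nδ → ℝ) :=
    fun y => {δ | ∀ ℓ, lo y ℓ ≤ δ ℓ ∧ δ ℓ ≤ hi y ℓ} with hBoxdef
  have hBoxEq : ∀ ω : Fin m → Fin nδ → ℝ,
      sampleBox ω I = Box (fun i => ω i.1) := by
    intro ω
    ext δ
    simp only [sampleBox, Box, Set.mem_setOf_eq, hlodef, hhidef]
    refine forall_congr' fun ℓ => ?_
    rw [Set.image_eq_range]
    exact Iff.rfl
  -- measurability of lo and hi
  have hlo : Measurable lo := by
    refine measurable_pi_lambda _ fun ℓ => ?_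
    have h1 : (fun y : Y => lo y ℓ) =
        fun y => Finset.univ.inf' Finset.univ_nonempty (fun i => y i ℓ) := by
      funext y
      rw [Finset.inf'_univ_eq_ciInf]
      rfl
    rw [h1]
    exact (Continuous.finset_inf'_apply Finset.univ_nonempty
      (fun i _ => (continuous_apply ℓ).comp (continuous_apply i))).measurable
  have hhi : Measurable hi := by
    refine measurable_pi_lambda _ fun ℓ => ?_
    have h1 : (fun y : Y => hi y ℓ) =
        fun y => Finset.univ.sup' Finset.univ_nonempty (fun i => y i ℓ) := by
      funext y
      rw [Finset.sup'_univ_eq_ciSup]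
      rfl
    rw [h1]
    exact (Continuous.finset_sup'_apply Finset.univ_nonempty
      (fun i _ => (continuous_apply ℓ).comp (continuous_apply i))).measurable
  -- measurability of y ↦ P (Box y)
  set S : Set (((Fin nδ → ℝ) × (Fin nδ → ℝ)) × (Fin nδ → ℝ)) :=
    {q | ∀ ℓ, q.1.1 ℓ ≤ q.2 ℓ ∧ q.2 ℓ ≤ q.1.2 ℓ} with hSdef
  have hS : MeasurableSet S := by
    have h1 : S = ⋂ ℓ, ({q : ((Fin nδ → ℝ) × (Fin nδ → ℝ)) × (Fin nδ → ℝ) | q.1.1 ℓ ≤ q.2 ℓ}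
        ∩ {q | q.2 ℓ ≤ q.1.2 ℓ}) := by
      ext q; simp [hSdef, forall_and]
    rw [h1]
    refine MeasurableSet.iInter fun ℓ => MeasurableSet.inter ?_ ?_
    · exact measurableSet_le measurable_fst.fst.eval measurable_snd.eval
    · exact measurableSet_le measurable_snd.eval measurable_fst.snd.eval
  have hBoxS : ∀ y : Y, Box y = Prod.mk (lo y, hi y) ⁻¹' S := fun y => rfl
  have hBoxMeasSet : ∀ y : Y, MeasurableSet (Box y) := fun y => by
    rw [hBoxS]; exact hS.preimage measurable_prodMk_left
  have hPBox : Measurable fun y : Y => P (Box y) := by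
    have h1 : (fun y : Y => P (Box y)) =
        (fun p : (Fin nδ → ℝ) × (Fin nδ → ℝ) => P (Prod.mk p ⁻¹' S)) ∘
          fun y => (lo y, hi y) := by
      funext y; simp [hBoxS y]
    rw [h1]
    exact (measurable_measure_prodMk_left hS).comp (hlo.prodMk hhi)
  have hPcomplEq : ∀ y : Y, P (Box y)ᶜ = 1 - P (Box y) := fun y => by
    rw [measure_compl (hBoxMeasSet y) (measure_ne_top _ _), measure_univ]
  have hPcompl : Measurable fun y : Y => P (Box y)ᶜ := by
    simp only [hPcomplEq]
    exact measurable_const.sub hPBox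
  -- the product-space event
  set T : Set (Y × ({i : Fin m // ¬ i ∈ I} → (Fin nδ → ℝ))) :=
    {q | (∀ i : {i : Fin m // i ∈ I}, q.1 i ∈ Box q.1) ∧
      (∀ j : {i : Fin m // ¬ i ∈ I}, q.2 j ∈ Box q.1) ∧
      ENNReal.ofReal ε < P (Box q.1)ᶜ} with hTdef
  have hT : MeasurableSet T := by
    have e1 : {q : Y × ({i : Fin m // ¬ i ∈ I} → (Fin nδ → ℝ)) |
        ∀ i : {i : Fin m // i ∈ I}, q.1 i ∈ Box q.1} =
        ⋂ (i : {i : Fin m // i ∈ I}) (ℓ : Fin nδ),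
          ({q : Y × ({i : Fin m // ¬ i ∈ I} → (Fin nδ → ℝ)) | lo q.1 ℓ ≤ q.1 i ℓ}
            ∩ {q | q.1 i ℓ ≤ hi q.1 ℓ}) := by
      ext q
      simp only [Set.mem_setOf_eq, Set.mem_iInter, Set.mem_inter_iff, hBoxdef]
    have e2 : {q : Y × ({i : Fin m // ¬ i ∈ I} → (Fin nδ → ℝ)) |
        ∀ j : {i : Fin m // ¬ i ∈ I}, q.2 j ∈ Box q.1} =
        ⋂ (j : {i : Fin m // ¬ i ∈ I}) (ℓ : Fin nδ),
          ({q : Y × ({i : Fin m // ¬ i ∈ I} → (Fin nδ → ℝ)) | lo q.1 ℓ ≤ q.2 j ℓ}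
            ∩ {q | q.2 j ℓ ≤ hi q.1 ℓ}) := by
      ext q
      simp only [Set.mem_setOf_eq, Set.mem_iInter, Set.mem_inter_iff, hBoxdef]
    have hT1 : T = {q : Y × ({i : Fin m // ¬ i ∈ I} → (Fin nδ → ℝ)) |
        ∀ i : {i : Fin m // i ∈ I}, q.1 i ∈ Box q.1} ∩
        ({q | ∀ j : {i : Fin m // ¬ i ∈ I}, q.2 j ∈ Box q.1} ∩
          {q | ENNReal.ofReal ε < P (Box q.1)ᶜ}) := rfl
    rw [hT1, e1, e2]
    refine MeasurableSet.inter ?_ (MeasurableSet.inter ?_ ?_)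
    · refine MeasurableSet.iInter fun i => MeasurableSet.iInter fun ℓ =>
        MeasurableSet.inter ?_ ?_
      · exact measurableSet_le (hlo.comp' measurable_fst).eval measurable_fst.eval.eval
      · exact measurableSet_le measurable_fst.eval.eval (hhi.comp' measurable_fst).eval
    · refine MeasurableSet.iInter fun j => MeasurableSet.iInter fun ℓ =>
        MeasurableSet.inter ?_ ?_
      · exact measurableSet_le (hlo.comp' measurable_fst).eval measurable_snd.eval.eval
      · exact measurableSet_le measurable_snd.eval.eval (hhi.comp' measurable_fst).eval
    · exact (hPcompl.comp' measurable_fst) measurableSet_Ioi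
  -- main computation
  set e := MeasurableEquiv.piEquivPiSubtypeProd (fun _ : Fin m => (Fin nδ → ℝ)) (· ∈ I)
    with hedef
  have hmp := measurePreserving_piEquivPiSubtypeProd (fun _ : Fin m => P) (· ∈ I)
  have hE : {ω : Fin m → Fin nδ → ℝ | (∀ j : Fin m, ω j ∈ sampleBox ω I) ∧
      ENNReal.ofReal ε < P (sampleBox ω I)ᶜ} = e ⁻¹' T := by
    ext ω
    have hb := hBoxEq ω
    simp only [Set.mem_preimage, Set.mem_setOf_eq, hTdef]
    constructor
    · rintro ⟨h1, h2⟩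
      refine ⟨fun i => ?_, fun j => ?_, ?_⟩
      · show ω i.1 ∈ Box (fun i : {i : Fin m // i ∈ I} => ω i.1)
        rw [← hb]; exact h1 i.1
      · show ω j.1 ∈ Box (fun i : {i : Fin m // i ∈ I} => ω i.1)
        rw [← hb]; exact h1 j.1
      · show ENNReal.ofReal ε < P (Box (fun i : {i : Fin m // i ∈ I} => ω i.1))ᶜ
        rw [← hb]; exact h2
    · rintro ⟨h1, h2, h3⟩
      constructor
      · intro j
        rw [hb]
        by_cases hj : j ∈ I
        · exact h1 ⟨j, hj⟩
        · exact h2 ⟨j, hj⟩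
      · rw [hb]
        exact h3
  rw [hE]
  have hμ := hmp.measure_preimage hT.nullMeasurableSet
  rw [hμ]
  set μ1 := Measure.pi fun _ : {i : Fin m // i ∈ I} => P with hμ1def
  set μ2 := Measure.pi fun _ : {i : Fin m // ¬ i ∈ I} => P with hμ2def
  rw [Measure.prod_apply hT]
  have hcard : Fintype.card {i : Fin m // ¬ i ∈ I} = m - I.card := by
    rw [Fintype.card_subtype_compl, Fintype.card_fin]
    congr 1
    exact Fintype.card_coe I
  have hbound : ∀ y : Y, μ2 (Prod.mk y ⁻¹' T) ≤ ENNReal.ofReal (1 - ε) ^ (m - I.card) := by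
    intro y
    by_cases hy : ENNReal.ofReal ε < P (Box y)ᶜ
    · have hPle : P (Box y) ≤ ENNReal.ofReal (1 - ε) := by
        rw [hPcomplEq y] at hy
        have h3 : P (Box y) ≤ 1 - ENNReal.ofReal ε := by
          have h4 := tsub_le_tsub_left hy.le (1 : ENNReal)
          rwa [ENNReal.sub_sub_cancel ENNReal.one_ne_top prob_le_one] at h4
        rw [ENNReal.ofReal_sub 1 hε0, ENNReal.ofReal_one]
        exact h3
      calc μ2 (Prod.mk y ⁻¹' T)
          ≤ μ2 (Set.univ.pi fun _ : {i : Fin m // ¬ i ∈ I} => Box y) := by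
            refine measure_mono ?_
            rintro z ⟨-, h2, -⟩ j -
            exact h2 j
        _ = ∏ _j : {i : Fin m // ¬ i ∈ I}, P (Box y) := Measure.pi_pi _ _
        _ = P (Box y) ^ (m - I.card) := by
            rw [Finset.prod_const, Finset.card_univ, hcard]
        _ ≤ ENNReal.ofReal (1 - ε) ^ (m - I.card) := pow_le_pow_left' hPle _
    · have hempty : Prod.mk y ⁻¹' T = ∅ := by
        ext z
        simp only [Set.mem_preimage, Set.mem_empty_iff_false, iff_false]
        rintro ⟨-, -, h3⟩
        exact hy h3
      rw [hempty]
      simp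
  refine le_trans (lintegral_mono hbound) ?_
  simp [lintegral_const]

end core

/-- Feasibility region `𝒳_m` of the robust problem `P₂[{δ_i}_{i∈S}]`. -/
def robustFeas {nδ nx m : ℕ} (X : Set (Fin nx → ℝ))
    (g : (Fin nx → ℝ) → (Fin nδ → ℝ) → ℝ)
    (ω : Fin m → Fin nδ → ℝ) (S : Finset (Fin m)) : Set (Fin nx → ℝ) :=
  {x | x ∈ X ∧ ∀ δ ∈ sampleBox ω S, g x δ ≤ 0}

/-- feasibility-region-wide guarantee for the probabilistically robust
design: if for every multisample the feasibility region `𝒳_m` of `P₂[{δ_i}_{i=1}^m]`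
has nonempty interior, then with `d = 2 n_δ ≤ m` and for every `ε ∈ (0,1)`,
`ℙ^m { sup_{x∈𝒳_m} ℙ(g(x,δ) > 0) > ε } ≤ binom(m,d) (1-ε)^(m-d)`. -/
theorem robust_design_uniform_violation_bound
    (nδ nx : ℕ) (P : Measure (Fin nδ → ℝ)) [IsProbabilityMeasure P]
    (X : Set (Fin nx → ℝ)) (g : (Fin nx → ℝ) → (Fin nδ → ℝ) → ℝ)
    (m : ℕ) (hm : 2 * nδ ≤ m)
    (hfeas : ∀ ω : Fin m → Fin nδ → ℝ,
      (interior (robustFeas X g ω Finset.univ)).Nonempty)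
    (ε : ℝ) (hε0 : 0 < ε) (hε1 : ε < 1) :
    (Measure.pi fun _ : Fin m => P)
      {ω : Fin m → Fin nδ → ℝ |
        ENNReal.ofReal ε <
          ⨆ x ∈ robustFeas X g ω Finset.univ, P {δ : Fin nδ → ℝ | 0 < g x δ}} ≤
      ENNReal.ofReal ((m.choose (2 * nδ) : ℝ) * (1 - ε) ^ (m - 2 * nδ)) := by
  classical
  rcases Nat.eq_zero_or_pos nδ with hnδ | hnδ
  · subst hnδ
    have hset : {ω : Fin m → Fin 0 → ℝ |
        ENNReal.ofReal ε <
          ⨆ x ∈ robustFeas X g ω Finset.univ, P {δ : Fin 0 → ℝ | 0 < g x δ}} = ∅ := by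
      ext ω
      simp only [Set.mem_setOf_eq, Set.mem_empty_iff_false, iff_false, not_lt]
      refine iSup₂_le fun x hx => ?_
      have hbox : ∀ δ : Fin 0 → ℝ, δ ∈ sampleBox ω Finset.univ := fun δ ℓ => ℓ.elim0
      have hempty : {δ : Fin 0 → ℝ | 0 < g x δ} = ∅ := by
        ext δ
        simp only [Set.mem_setOf_eq, Set.mem_empty_iff_false, iff_false, not_lt]
        exact hx.2 δ (hbox δ)
      rw [hempty, measure_empty]
      exact zero_le
    rw [hset, measure_empty]
    exact zero_le
  · set d := 2 * nδ with hd
    have hsub : {ω : Fin m → Fin nδ → ℝ |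
        ENNReal.ofReal ε <
          ⨆ x ∈ robustFeas X g ω Finset.univ, P {δ : Fin nδ → ℝ | 0 < g x δ}} ⊆
        ⋃ I ∈ Finset.univ.powersetCard d,
          {ω : Fin m → Fin nδ → ℝ | (∀ j : Fin m, ω j ∈ sampleBox ω I) ∧
            ENNReal.ofReal ε < P (sampleBox ω I)ᶜ} := by
      intro ω hω
      simp only [Set.mem_setOf_eq] at hω
      obtain ⟨x, hx, hεx⟩ : ∃ x ∈ robustFeas X g ω Finset.univ,
          ENNReal.ofReal ε < P {δ : Fin nδ → ℝ | 0 < g x δ} := by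
        by_contra hcon
        push_neg at hcon
        exact absurd hω (not_lt.2 (iSup₂_le hcon))
      obtain ⟨I, hIne, hIcard, hIbox⟩ := exists_core hnδ hm ω
      refine Set.mem_biUnion (Finset.mem_powersetCard.2 ⟨Finset.subset_univ I, hIcard⟩) ?_
      constructor
      · intro j
        rw [hIbox]
        exact mem_sampleBox_self (Finset.mem_univ j)
      · refine lt_of_lt_of_le hεx (measure_mono ?_)
        intro δ hδ
        rw [hIbox]
        intro hmem
        exact absurd (hx.2 δ hmem) (not_le.2 hδ)
    refine le_trans (measure_mono hsub) ?_
    refine le_trans (measure_biUnion_finset_le _ _) ?_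
    have hterm : ∀ I ∈ Finset.univ.powersetCard d,
        (Measure.pi fun _ : Fin m => P)
          {ω : Fin m → Fin nδ → ℝ | (∀ j : Fin m, ω j ∈ sampleBox ω I) ∧
            ENNReal.ofReal ε < P (sampleBox ω I)ᶜ} ≤
          ENNReal.ofReal (1 - ε) ^ (m - d) := by
      intro I hI
      obtain ⟨hIsub, hIcard⟩ := Finset.mem_powersetCard.1 hI
      have hIne : I.Nonempty := Finset.card_pos.1 (by rw [hIcard]; omega)
      have hk := key_bound P I hIne ε hε0.le
      rwa [hIcard] at hk
    refine le_trans (Finset.sum_le_sum hterm) ?_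
    rw [Finset.sum_const, Finset.card_powersetCard, Finset.card_univ, Fintype.card_fin,
      nsmul_eq_mul]
    rw [ENNReal.ofReal_mul (by positivity), ENNReal.ofReal_pow (by linarith),
      ENNReal.ofReal_natCast]
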